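/- For positive definite A and B and t ∈ [0,1], |(A◇_t B)^{1/2} A^{1/2}| = (1-t)A + t|B^{1/2}A^{1/2}|, provided (1-t)A + t|B^{1/2}A^{1/2}| is positive semi-definite (which holds for t ∈ [0,1]). -/

import Mathlib

open Matrix Filter Asymptotics
open scoped ComplexOrder

/-- The PSD square root of a matrix (0 if not PSD). -/
noncomputable def msqrt {n : ℕ} (M : Matrix (Fin n) (Fin n) ℂ) : Matrix (Fin n) (Fin n) ℂ :=
  letI := Classical.propDecidable M.PosSemidef
  if h : M.PosSemidef then
    (h.1.eigenvectorUnitary : Matrix (Fin n) (Fin n) ℂ) *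
      diagonal ((↑) ∘ (Real.sqrt ·) ∘ h.1.eigenvalues) *
      (star h.1.eigenvectorUnitary : Matrix (Fin n) (Fin n) ℂ)
  else 0

/-- `(AB)^{1/2} := A^{1/2} (A^{1/2} B A^{1/2})^{1/2} A^{-1/2}`. -/
noncomputable def sqAB {n : ℕ} (A B : Matrix (Fin n) (Fin n) ℂ) : Matrix (Fin n) (Fin n) ℂ :=
  msqrt A * msqrt (msqrt A * B * msqrt A) * (msqrt A)⁻¹

/-- Bures-Wasserstein geodesic `A ◇_t B`. -/
noncomputable def geo {n : ℕ} (A B : Matrix (Fin n) (Fin n) ℂ) (t : ℝ) : Matrix (Fin n) (Fin n) ℂ :=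
  ((1 - t)^2 : ℝ) • A + (t^2 : ℝ) • B + (t * (1 - t) : ℝ) • (sqAB A B + (sqAB A B)ᴴ)

/-- Bures-Wasserstein distance. -/
noncomputable def dBW {n : ℕ} (A B : Matrix (Fin n) (Fin n) ℂ) : ℝ :=
  Real.sqrt ((Matrix.trace A).re + (Matrix.trace B).re -
    2 * (Matrix.trace (msqrt (msqrt A * B * msqrt A))).re)

section
open scoped MatrixOrder
lemma msqrt_eq_cfc {n : ℕ} {M : Matrix (Fin n) (Fin n) ℂ} (h : M.PosSemidef) :
    msqrt M = CFC.sqrt M := by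
  have h0 : 0 ≤ M := Matrix.nonneg_iff_posSemidef.mpr h
  rw [CFC.sqrt_eq_real_sqrt M h0, cfcₙ_eq_cfc, h.1.cfc_eq, msqrt, dif_pos h]
  simp only [IsHermitian.cfc]
  rfl

lemma msqrt_psd {n : ℕ} {M : Matrix (Fin n) (Fin n) ℂ} (h : M.PosSemidef) :
    (msqrt M).PosSemidef := by
  rw [msqrt_eq_cfc h, ← Matrix.nonneg_iff_posSemidef]; exact CFC.sqrt_nonneg M

lemma msqrt_mul_self {n : ℕ} {M : Matrix (Fin n) (Fin n) ℂ} (h : M.PosSemidef) :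
    msqrt M * msqrt M = M := by
  rw [msqrt_eq_cfc h]; exact CFC.sqrt_mul_sqrt_self M (Matrix.nonneg_iff_posSemidef.mpr h)

lemma msqrt_unique {n : ℕ} {M R : Matrix (Fin n) (Fin n) ℂ} (hR : R.PosSemidef)
    (h : R * R = M) : msqrt M = R := by
  have hM : M.PosSemidef := by
    rw [← h]; have := hR.pow 2; rwa [pow_two] at this
  rw [msqrt_eq_cfc hM]; exact CFC.sqrt_unique h (Matrix.nonneg_iff_posSemidef.mpr hR)
end

lemma smul_posSemidef {n : ℕ} {c : ℝ} (hc : 0 ≤ c) {M : Matrix (Fin n) (Fin n) ℂ}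
    (hM : M.PosSemidef) : (c • M).PosSemidef := by
  constructor
  · unfold Matrix.IsHermitian
    rw [conjTranspose_smul, hM.1.eq]
    simp
  · exact (hM.smul hc).2

theorem stmt4 {n : ℕ} (A B : Matrix (Fin n) (Fin n) ℂ)
    (hA : A.PosDef) (hB : B.PosDef) (t : ℝ) (ht0 : 0 ≤ t) (ht1 : t ≤ 1) :
    msqrt ((msqrt (geo A B t) * msqrt A)ᴴ * (msqrt (geo A B t) * msqrt A)) =
      (1 - t) • A + t • msqrt (msqrt A * B * msqrt A) := by
  have hA' := hA.posSemidef
  set C := msqrt A with hCdef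
  have hCs : C = msqrt A := rfl
  have hC : C.PosSemidef := by rw [hCs]; exact msqrt_psd hA'
  have hCH : Cᴴ = C := hC.1
  have hCC : C * C = A := by rw [hCs]; exact msqrt_mul_self hA'
  -- C invertible
  have hdet : IsUnit C.det := by
    have hAdet : IsUnit A.det := hA.det_pos.ne'.isUnit
    rw [← hCC, det_mul] at hAdet
    exact isUnit_of_mul_isUnit_left hAdet
  have hCiH : (C⁻¹)ᴴ = C⁻¹ := by rw [conjTranspose_nonsing_inv, hCH]
  -- S
  have hM : (C * B * C).PosSemidef := by
    have := hB.posSemidef.conjTranspose_mul_mul_same C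
    rwa [hCH] at this
  set S := msqrt (C * B * C) with hSdef
  have hSs : S = msqrt (C * B * C) := rfl
  have hS : S.PosSemidef := by rw [hSs]; exact msqrt_psd hM
  have hSH : Sᴴ = S := hS.1
  have hSS : S * S = C * B * C := by rw [hSs]; exact msqrt_mul_self hM
  -- R
  set R := (1 - t) • A + t • S with hRdef
  have hR : R.PosSemidef := (smul_posSemidef (by linarith) hA').add (smul_posSemidef ht0 hS)
  have hRH : Rᴴ = R := hR.1
  have hi1 : C⁻¹ * C = 1 := nonsing_inv_mul C hdet
  have hi2 : C * C⁻¹ = 1 := mul_nonsing_inv C hdet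
  -- cancellation helpers
  have l1 : ∀ X : Matrix (Fin n) (Fin n) ℂ, C⁻¹ * (C * X) = X :=
    fun X => nonsing_inv_mul_cancel_left C X hdet
  have l2 : ∀ X : Matrix (Fin n) (Fin n) ℂ, C * (C⁻¹ * X) = X :=
    fun X => mul_nonsing_inv_cancel_left C X hdet
  -- conj transpose of sqAB
  have hPH : (C * S * C⁻¹)ᴴ = C⁻¹ * (S * C) := by
    simp [conjTranspose_mul, hCiH, hSH, hCH, Matrix.mul_assoc]
  -- key identity
  have hKey : C * geo A B t * C = R * R := by
    simp only [geo, sqAB, ← hCdef, ← hSdef, hPH, hRdef]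
    simp only [Matrix.mul_add, Matrix.add_mul, smul_add, Matrix.smul_mul, Matrix.mul_smul,
      smul_mul_assoc, mul_smul_comm, Matrix.mul_assoc, l1, l2]
    simp only [hSS, ← hCC, Matrix.mul_assoc, l1, l2, hi1, hi2, Matrix.mul_one, Matrix.one_mul]
    module
  -- geo is PSD
  have hGeq : geo A B t = (R * C⁻¹)ᴴ * (R * C⁻¹) := by
    have h1 : (R * C⁻¹)ᴴ = C⁻¹ * R := by rw [conjTranspose_mul, hCiH, hRH]
    rw [h1]
    have h2 := congrArg (fun X => C⁻¹ * X * C⁻¹) hKey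
    simp only [Matrix.mul_assoc, l1, l2, hi1, hi2, Matrix.mul_one, Matrix.one_mul] at h2
    rw [Matrix.mul_assoc]
    exact h2
  have hG : (geo A B t).PosSemidef := by
    rw [hGeq]; exact posSemidef_conjTranspose_mul_self _
  set Q := msqrt (geo A B t) with hQdef
  have hQs : Q = msqrt (geo A B t) := rfl
  have hQH : Qᴴ = Q := by rw [hQs]; exact (msqrt_psd hG).1
  have hQQ : Q * Q = geo A B t := by rw [hQs]; exact msqrt_mul_self hG
  have hQQ' : ∀ X : Matrix (Fin n) (Fin n) ℂ, Q * (Q * X) = geo A B t * X :=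
    fun X => by rw [← Matrix.mul_assoc, hQQ]
  have hinner : (Q * C)ᴴ * (Q * C) = R * R := by
    rw [conjTranspose_mul, hQH, hCH]
    simp only [Matrix.mul_assoc, hQQ']
    rw [← Matrix.mul_assoc]
    exact hKey
  have hRR : (R * R).PosSemidef := by
    have := hR.pow 2; rwa [pow_two] at this
  rw [hinner]
  exact msqrt_unique hR rfl
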